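/- A monotone consistent scheme is L¹-contractive (Crandall–Tartar): if H : ℝ³ → ℝ is nondecreasing in each argument and conserves sums in the sense that Σ_j H(S_{j−1},S_j,S_{j+1}) = Σ_j S_j for all finitely supported states (periodic or with fixed boundaries), then for two states S, T on a periodic grid, Σ_j |H(S)_j − H(T)_j| ≤ Σ_j |S_j − T_j|. Prove the abstract Crandall–Tartar lemma: a monotone, sum-preserving map on ℝ^N satisfies Σ|Φ(x)_i − Φ(y)_i| ≤ Σ|x_i − y_i|. -/
import Mathlib

/-- Crandall–Tartar lemma: a monotone, sum-preserving map on `ℝ^N` is an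
`L¹` contraction. -/
theorem crandall_tartar (N : ℕ) (Φ : (Fin N → ℝ) → (Fin N → ℝ))
    (hmono : ∀ x y : Fin N → ℝ, (∀ i, x i ≤ y i) → ∀ i, Φ x i ≤ Φ y i)
    (hsum : ∀ x : Fin N → ℝ, ∑ i, Φ x i = ∑ i, x i) :
    ∀ x y : Fin N → ℝ, ∑ i, |Φ x i - Φ y i| ≤ ∑ i, |x i - y i| := by
  intro x y
  set z : Fin N → ℝ := fun i => max (x i) (y i) with hz
  have hx : ∀ i, Φ x i ≤ Φ z i := hmono x z (fun i => le_max_left _ _)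
  have hy : ∀ i, Φ y i ≤ Φ z i := hmono y z (fun i => le_max_right _ _)
  have step : ∀ i, |Φ x i - Φ y i| ≤ 2 * Φ z i - Φ x i - Φ y i := by
    intro i
    rcases abs_cases (Φ x i - Φ y i) with ⟨h, _⟩ | ⟨h, _⟩ <;> rw [h] <;>
      [linarith [hx i]; linarith [hy i]]
  calc ∑ i, |Φ x i - Φ y i| ≤ ∑ i, (2 * Φ z i - Φ x i - Φ y i) :=
        Finset.sum_le_sum fun i _ => step i
    _ = 2 * (∑ i, Φ z i) - (∑ i, Φ x i) - (∑ i, Φ y i) := by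
        simp [Finset.sum_sub_distrib, Finset.mul_sum]
    _ = 2 * (∑ i, z i) - (∑ i, x i) - (∑ i, y i) := by rw [hsum, hsum, hsum]
    _ = ∑ i, (2 * z i - x i - y i) := by
        simp [Finset.sum_sub_distrib, Finset.mul_sum]
    _ = ∑ i, |x i - y i| := by
        apply Finset.sum_congr rfl
        intro i _
        rcases abs_cases (x i - y i) with ⟨h, h2⟩ | ⟨h, h2⟩ <;> rw [h, hz] <;>
          simp only [] <;>
          [rw [max_eq_left (by linarith)]; rw [max_eq_right (by linarith)]] <;> ring
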